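/- arXiv:1801.08674 — 3 statements merged into one kernel-verified Lean document; each statement's English description precedes it below -/
import Mathlib

section
/- Let m be a positive integer, A : ℝ → Matrix (Fin m) (Fin m) ℝ, and let w, v : ℝ → EuclideanSpace ℝ (Fin m) be differentiable with w'(t) = A(t) ·ᵥ w(t) and v'(t) = −(A(t))ᵀ ·ᵥ v(t) for all t ∈ ℝ. Suppose there exist C > 0 and real numbers μ ≠ λ such that ‖w(t₂)‖ ≤ C e^{μ(t₂−t₁)} ‖w(t₁)‖ for all t₁, t₂ ∈ ℝ (w is a tangent CLV with exponent μ) and ‖v(t₁)‖ ≤ C e^{λ(t₂−t₁)} ‖v(t₂)‖ for all t₁, t₂ ∈ ℝ (v is an adjoint CLV with exponent λ). Then ⟨w(t), v(t)⟩ = 0 for all t ∈ ℝ. (Tangent CLVs and adjoint CLVs with distinct exponents are orthogonal.) -/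
open Matrix Real
open scoped RealInnerProductSpace

/-- Tangent CLVs and adjoint CLVs with distinct exponents are orthogonal. -/
theorem stmt_4 (m : ℕ) (hm : 0 < m)
    (A : ℝ → Matrix (Fin m) (Fin m) ℝ)
    (w v : ℝ → EuclideanSpace ℝ (Fin m))
    (hw : Differentiable ℝ w) (hv : Differentiable ℝ v)
    (hw' : ∀ t : ℝ, deriv w t = (A t) *ᵥ (w t))
    (hv' : ∀ t : ℝ, deriv v t = (-(A t)ᵀ) *ᵥ (v t))
    (C : ℝ) (hC : 0 < C) (μ lam : ℝ) (hne : μ ≠ lam)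
    (hwCLV : ∀ t₁ t₂ : ℝ, ‖w t₂‖ ≤ C * exp (μ * (t₂ - t₁)) * ‖w t₁‖)
    (hvCLV : ∀ t₁ t₂ : ℝ, ‖v t₁‖ ≤ C * exp (lam * (t₂ - t₁)) * ‖v t₂‖) :
    ∀ t : ℝ, ⟪w t, v t⟫ = 0 := by
  -- The inner product is constant in time.
  have hconst : ∀ s t : ℝ, ⟪w s, v s⟫ = ⟪w t, v t⟫ := by
    have key : ∀ (B : Matrix (Fin m) (Fin m) ℝ) (x y : EuclideanSpace ℝ (Fin m)),
        @inner ℝ (EuclideanSpace ℝ (Fin m)) _ x (WithLp.toLp 2 (-Bᵀ *ᵥ y)) +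
        @inner ℝ (EuclideanSpace ℝ (Fin m)) _ (WithLp.toLp 2 (B *ᵥ x)) y = 0 := by
      intro B x y
      rw [EuclideanSpace.inner_eq_star_dotProduct, EuclideanSpace.inner_eq_star_dotProduct]
      simp only [star_trivial]
      rw [Matrix.neg_mulVec, neg_dotProduct, Matrix.dotProduct_mulVec,
        Matrix.mulVec_transpose]
      simp [dotProduct_comm]
    have hdf : ∀ t : ℝ, HasDerivAt (fun s => ⟪w s, v s⟫) 0 t := by
      intro t
      have h := ((hw t).hasDerivAt.inner ℝ (hv t).hasDerivAt)
      have hz : ⟪w t, deriv v t⟫ + ⟪deriv w t, v t⟫ = 0 := by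
        rw [show deriv w t = WithLp.toLp 2 (A t *ᵥ w t) from congrArg (WithLp.toLp 2) (hw' t),
          show deriv v t = WithLp.toLp 2 (-(A t)ᵀ *ᵥ v t) from congrArg (WithLp.toLp 2) (hv' t)]
        exact key (A t) (w t) (v t)
      rwa [hz] at h
    intro s t
    exact is_const_of_deriv_eq_zero (fun x => (hdf x).differentiableAt)
      (fun x => (hdf x).deriv) s t
  intro t
  set c := ⟪w t, v t⟫ with hc
  -- bound |c| by K * exp ((μ - lam) * (s - t)) for all s
  have hbound : ∀ s : ℝ, |c| ≤ C * C * ‖w t‖ * ‖v t‖ * exp ((μ - lam) * (s - t)) := by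
    intro s
    have h1 : |c| ≤ ‖w s‖ * ‖v s‖ := by
      rw [hc, hconst t s]
      exact abs_real_inner_le_norm _ _
    have h2 : ‖w s‖ ≤ C * exp (μ * (s - t)) * ‖w t‖ := hwCLV t s
    have h3 : ‖v s‖ ≤ C * exp (lam * (t - s)) * ‖v t‖ := by
      have := hvCLV s t
      rwa [show lam * (t - s) = lam * (t - s) by ring] at this
    calc |c| ≤ ‖w s‖ * ‖v s‖ := h1
      _ ≤ (C * exp (μ * (s - t)) * ‖w t‖) * (C * exp (lam * (t - s)) * ‖v t‖) := by
          apply mul_le_mul h2 h3 (norm_nonneg _)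
          positivity
      _ = C * C * ‖w t‖ * ‖v t‖ * exp ((μ - lam) * (s - t)) := by
          rw [show (μ - lam) * (s - t) = μ * (s - t) + lam * (t - s) by ring, Real.exp_add]
          ring
  -- For any u, |c| ≤ K * exp u (choose s appropriately)
  have hd : μ - lam ≠ 0 := sub_ne_zero.mpr hne
  have hbound2 : ∀ u : ℝ, |c| ≤ C * C * ‖w t‖ * ‖v t‖ * exp u := by
    intro u
    have := hbound (t + u / (μ - lam))
    rwa [show (μ - lam) * (t + u / (μ - lam) - t) = u by field_simp; ring] at this
  have hlim : Filter.Tendsto (fun u : ℝ => C * C * ‖w t‖ * ‖v t‖ * exp u)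
      Filter.atBot (nhds 0) := by
    have := Real.tendsto_exp_atBot.const_mul (C * C * ‖w t‖ * ‖v t‖)
    simpa using this
  have : |c| ≤ 0 := ge_of_tendsto hlim (Filter.Eventually.of_forall hbound2)
  have : |c| = 0 := le_antisymm this (abs_nonneg _)
  exact abs_eq_zero.mp this
end

section
/- Let m be a positive integer, f : EuclideanSpace ℝ (Fin m) → EuclideanSpace ℝ (Fin m) continuously differentiable, and u : ℝ → EuclideanSpace ℝ (Fin m) differentiable with u'(t) = f(u(t)) for all t ∈ ℝ. Assume there is M ≥ 0 with ‖f(u(t))‖ ≤ M for all t ∈ ℝ. Let v : ℝ → EuclideanSpace ℝ (Fin m) be differentiable with v'(t) = −(f_u(u(t)))ᵀ ·ᵥ v(t) for all t, where f_u(u(t)) is the Jacobian matrix of f at u(t), and suppose v is an adjoint CLV with nonzero exponent: there exist C > 0 and λ ≠ 0 with ‖v(t₁)‖ ≤ C e^{λ(t₂−t₁)} ‖v(t₂)‖ for all t₁, t₂ ∈ ℝ. Then ⟨f(u(t)), v(t)⟩ = 0 for all t ∈ ℝ. (The vector field f is orthogonal to every non-neutral adjoint CLV.) -/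
open Matrix Real
open scoped RealInnerProductSpace

/-- The vector field `f` along a bounded trajectory is orthogonal to every
non-neutral adjoint CLV. The Jacobian matrix of `f` at `u t` has entries
`J t i j = (Df)(u t) (e_j) i`. -/
theorem stmt_6 (m : ℕ) (hm : 0 < m)
    (f : EuclideanSpace ℝ (Fin m) → EuclideanSpace ℝ (Fin m))
    (hf : ContDiff ℝ 1 f)
    (u : ℝ → EuclideanSpace ℝ (Fin m))
    (hu : Differentiable ℝ u)
    (hu' : ∀ t : ℝ, deriv u t = f (u t))
    (M : ℝ) (hM : 0 ≤ M) (hbound : ∀ t : ℝ, ‖f (u t)‖ ≤ M)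
    (J : ℝ → Matrix (Fin m) (Fin m) ℝ)
    (hJ : ∀ (t : ℝ) (i j : Fin m),
      J t i j = fderiv ℝ f (u t) (EuclideanSpace.single j (1 : ℝ)) i)
    (v : ℝ → EuclideanSpace ℝ (Fin m))
    (hv : Differentiable ℝ v)
    (hv' : ∀ t : ℝ, deriv v t = (-(J t)ᵀ) *ᵥ (v t))
    (C : ℝ) (hC : 0 < C) (lam : ℝ) (hlam : lam ≠ 0)
    (hvCLV : ∀ t₁ t₂ : ℝ, ‖v t₁‖ ≤ C * exp (lam * (t₂ - t₁)) * ‖v t₂‖) :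
    ∀ t : ℝ, ⟪f (u t), v t⟫ = 0 := by
  have hfd : Differentiable ℝ f := hf.differentiable one_ne_zero
  -- Jacobian action
  have hJact : ∀ (t : ℝ) (w : EuclideanSpace ℝ (Fin m)) (i : Fin m),
      fderiv ℝ f (u t) w i = (J t *ᵥ w) i := by
    intro t w i
    have hw : w = ∑ j, w j • EuclideanSpace.single j (1:ℝ) := by
      ext i; rw [WithLp.ofLp_sum, Finset.sum_apply]; simp [EuclideanSpace.single_apply]
    conv_lhs => rw [hw]
    rw [map_sum, WithLp.ofLp_sum, Finset.sum_apply]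
    simp only [_root_.map_smul, Matrix.mulVec, dotProduct, hJ]
    simp [mul_comm]
  -- g is the inner product
  set g : ℝ → ℝ := fun t => ⟪f (u t), v t⟫ with hg
  have hder : ∀ t, HasDerivAt g 0 t := by
    intro t
    have h1 : HasDerivAt (fun t => f (u t)) (fderiv ℝ f (u t) (f (u t))) t := by
      have := (hfd (u t)).hasFDerivAt.comp_hasDerivAt t (hu t).hasDerivAt
      rwa [hu' t] at this
    have h2 : HasDerivAt v (WithLp.toLp 2 ((-(J t)ᵀ) *ᵥ (v t))) t := by
      have := (hv t).hasDerivAt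
      rwa [← WithLp.toLp_ofLp (x := deriv v t), hv' t] at this
    have h3 := h1.inner ℝ h2
    refine h3.congr_deriv ?_
    rw [PiLp.inner_apply, PiLp.inner_apply]
    simp only [RCLike.inner_apply', starRingEnd_apply, star_trivial]
    have : ∀ i : Fin m, fderiv ℝ f (u t) (f (u t)) i = (J t *ᵥ f (u t)) i := hJact t _
    simp only [this]
    show f (u t) ⬝ᵥ (-(J t)ᵀ *ᵥ v t) + (J t *ᵥ f (u t)) ⬝ᵥ v t = (0:ℝ)
    rw [Matrix.neg_mulVec, dotProduct_neg, Matrix.dotProduct_mulVec,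
      Matrix.vecMul_transpose]
    ring
  have hgdiff : Differentiable ℝ g := fun t => (hder t).differentiableAt
  have hconst : ∀ x y : ℝ, g x = g y :=
    is_const_of_deriv_eq_zero hgdiff (fun t => (hder t).deriv)
  intro t
  by_contra hne
  have hgt : 0 < |g t| := abs_pos.mpr hne
  have habs : ∀ s : ℝ, |g t| ≤ M * C * ‖v 0‖ * exp (-(lam * s)) := by
    intro s
    calc |g t| = |g s| := by rw [hconst t s]
      _ ≤ ‖f (u s)‖ * ‖v s‖ := abs_real_inner_le_norm _ _
      _ ≤ M * ‖v s‖ := mul_le_mul_of_nonneg_right (hbound s) (norm_nonneg _)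
      _ ≤ M * (C * exp (lam * (0 - s)) * ‖v 0‖) :=
          mul_le_mul_of_nonneg_left (hvCLV s 0) hM
      _ = M * C * ‖v 0‖ * exp (-(lam * s)) := by rw [zero_sub, mul_neg]; ring
  set K := M * C * ‖v 0‖ with hKdef
  have hK0 : 0 ≤ K := by positivity
  rcases eq_or_lt_of_le hK0 with h0 | hKpos
  · have h := habs 0
    rw [mul_zero, neg_zero, Real.exp_zero, mul_one, ← h0] at h
    linarith
  · have hr : 0 < |g t| / (2 * K) := by positivity
    have h := habs (Real.log (|g t| / (2 * K)) / (-lam))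
    rw [show -(lam * (Real.log (|g t| / (2 * K)) / (-lam))) = Real.log (|g t| / (2 * K)) by
      field_simp, Real.exp_log hr] at h
    rw [div_eq_mul_inv] at h
    have h2 : K * (|g t| * (2 * K)⁻¹) = |g t| / 2 := by
      field_simp
    rw [h2] at h
    linarith
end

section
/- Let m be a positive integer, (A_l)_{l ∈ ℤ} a family of matrices in Matrix (Fin m) (Fin m) ℝ, and (w_l)_{l ∈ ℤ}, (v_l)_{l ∈ ℤ} sequences in EuclideanSpace ℝ (Fin m) satisfying w_{l+1} = A_l ·ᵥ w_l and v_l = (A_l)ᵀ ·ᵥ v_{l+1} for all l ∈ ℤ. Suppose there exist C > 0 and real numbers μ ≠ λ such that ‖w_{l₂}‖ ≤ C e^{μ(l₂−l₁)} ‖w_{l₁}‖ and ‖v_{l₁}‖ ≤ C e^{λ(l₂−l₁)} ‖v_{l₂}‖ for all l₁, l₂ ∈ ℤ. Then ⟨w_l, v_l⟩ = 0 for all l ∈ ℤ. (For hyperbolic diffeomorphisms, tangent CLVs and adjoint CLVs with distinct exponents are orthogonal.) -/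
open Matrix Real
open scoped RealInnerProductSpace

/-- For hyperbolic diffeomorphisms, tangent CLVs and adjoint CLVs with distinct
exponents are orthogonal. -/
theorem stmt_17 (m : ℕ) (hm : 0 < m)
    (A : ℤ → Matrix (Fin m) (Fin m) ℝ)
    (w v : ℤ → EuclideanSpace ℝ (Fin m))
    (hw : ∀ l : ℤ, w (l + 1) = (A l) *ᵥ (w l))
    (hv : ∀ l : ℤ, v l = (A l)ᵀ *ᵥ (v (l + 1)))
    (C : ℝ) (hC : 0 < C) (μ lam : ℝ) (hne : μ ≠ lam)
    (hwCLV : ∀ l₁ l₂ : ℤ, ‖w l₂‖ ≤ C * exp (μ * ((l₂ : ℝ) - (l₁ : ℝ))) * ‖w l₁‖)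
    (hvCLV : ∀ l₁ l₂ : ℤ, ‖v l₁‖ ≤ C * exp (lam * ((l₂ : ℝ) - (l₁ : ℝ))) * ‖v l₂‖) :
    ∀ l : ℤ, ⟪w l, v l⟫ = 0 := by
  -- Step 1: the inner product is invariant under one step
  have step : ∀ l : ℤ, ⟪w (l + 1), v (l + 1)⟫ = ⟪w l, v l⟫ := by
    intro l
    simp only [PiLp.inner_apply, RCLike.inner_apply, conj_trivial]
    rw [hw l]
    conv_rhs => rw [hv l]
    simp only [PiLp.inner_apply, RCLike.inner_apply, conj_trivial, Matrix.mulVec,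
      dotProduct, Matrix.transpose_apply, Finset.sum_mul, Finset.mul_sum]
    rw [Finset.sum_comm]
    apply Finset.sum_congr rfl; intros; apply Finset.sum_congr rfl; intros; ring
  -- Step 2: the inner product is constant
  have const : ∀ l : ℤ, ⟪w l, v l⟫ = ⟪w 0, v 0⟫ := by
    intro l
    induction l using Int.induction_on with
    | zero => rfl
    | succ k ih => rw [step k] at *; exact ih
    | pred k ih =>
      rw [← ih]
      have h := step (-(k:ℤ) - 1)
      simp only [sub_add_cancel] at h
      exact h.symm
  -- Step 3: bound |c| by K * exp(δ * n) for every n : ℤ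
    -- with WLOG structure: handle δ := μ - lam sign
  intro l
  rw [const l]
  set c := ⟪w 0, v 0⟫ with hc
  set K := C * C * (‖w 0‖ * ‖v 0‖) with hK
  have hKnn : 0 ≤ K := by positivity
  have key : ∀ n : ℤ, |c| ≤ K * exp ((μ - lam) * n) := by
    intro n
    have h1 : |c| ≤ ‖w n‖ * ‖v n‖ := by
      calc |c| = |⟪w n, v n⟫| := by rw [const n]
        _ ≤ ‖w n‖ * ‖v n‖ := abs_real_inner_le_norm _ _
    have h2 := hwCLV 0 n
    have h3 := hvCLV n 0
    simp only [Int.cast_zero, sub_zero, zero_sub, mul_neg] at h2 h3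
    calc |c| ≤ ‖w n‖ * ‖v n‖ := h1
      _ ≤ (C * exp (μ * n) * ‖w 0‖) * (C * exp (-(lam * n)) * ‖v 0‖) := by
          apply mul_le_mul h2 h3 (norm_nonneg _) (by positivity)
      _ = K * exp ((μ - lam) * n) := by
          rw [hK, show (μ - lam) * (n:ℝ) = μ * n + -(lam * n) by ring, Real.exp_add]; ring
  -- Step 4: take a limit along a sign-adapted sequence
  have habs : |c| ≤ 0 := by
    set δ := μ - lam with hδ
    have hδne : δ ≠ 0 := sub_ne_zero.mpr hne
    have hlim : Filter.Tendsto (fun k : ℕ => K * exp (-|δ| * k)) Filter.atTop (nhds 0) := by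
      have : Filter.Tendsto (fun k : ℕ => (-|δ| * k : ℝ)) Filter.atTop Filter.atBot := by
        apply Filter.Tendsto.neg_mul_atTop (neg_neg_iff_pos.mpr (abs_pos.mpr hδne))
          tendsto_const_nhds tendsto_natCast_atTop_atTop
      have := (Real.tendsto_exp_atBot.comp this).const_mul K
      simpa using this
    apply ge_of_tendsto' hlim
    intro k
    rcases le_or_gt δ 0 with h | h
    · rw [abs_of_nonpos h, neg_neg]
      simpa using key (k:ℤ)
    · have hk := key (-(k:ℤ))
      rw [show (((-(k:ℤ)) : ℤ) : ℝ) = -(k:ℝ) by push_cast; ring,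
        show δ * -(k:ℝ) = -|δ| * k by rw [abs_of_pos h]; ring] at hk
      exact hk
  exact abs_eq_zero.mp (le_antisymm habs (abs_nonneg c))
end
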